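/- arXiv:1902.08420 — 7 statements merged into one kernel-verified Lean document; each statement's English description precedes it below -/
import Mathlib

section
/- In the calculus Simple, the standard reduction is deterministic: for all Simple expressions e, e1, e2, if e →sr e1 and e →sr e2, then e1 = e2. -/
/-- Expressions of the calculus `Simple`: `e ::= ⊥ | ⊤ | ¬e | e ∧ e`. -/
inductive SExp : Type where
  | bot : SExp
  | top : SExp
  | neg : SExp → SExp
  | and : SExp → SExp → SExp

/-- Evaluation contexts: `A ::= [·] | ¬A | A ∧ e`. -/
inductive ECtx : Type where
  | hole : ECtx
  | neg : ECtx → ECtx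
  | and : ECtx → SExp → ECtx

/-- Hole filling for evaluation contexts. -/
def ECtx.fill : ECtx → SExp → SExp
  | .hole, e => e
  | .neg A, e => .neg (A.fill e)
  | .and A t, e => .and (A.fill e) t

/-- General contexts: `C ::= [·] | ¬C | C ∧ e | e ∧ C`. -/
inductive GCtx : Type where
  | hole : GCtx
  | neg : GCtx → GCtx
  | andL : GCtx → SExp → GCtx
  | andR : SExp → GCtx → GCtx

/-- Hole filling for general contexts. -/
def GCtx.fill : GCtx → SExp → SExp
  | .hole, e => e
  | .neg C, e => .neg (C.fill e)
  | .andL C t, e => .and (C.fill e) t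
  | .andR t C, e => .and t (C.fill e)

/-- Labels of the standard-reduction rules. -/
inductive SRLab : Type where
  | bot | top | neg1 | neg2

/-- The labelled standard reduction rules of `Simple`. -/
inductive SRL : SRLab → SExp → SExp → Prop where
  | bot (A : ECtx) (e : SExp) : SRL .bot (A.fill (.and .bot e)) (A.fill .bot)
  | top (A : ECtx) (e : SExp) : SRL .top (A.fill (.and .top e)) (A.fill e)
  | neg1 (A : ECtx) : SRL .neg1 (A.fill (.neg .top)) (A.fill .bot)
  | neg2 (A : ECtx) : SRL .neg2 (A.fill (.neg .bot)) (A.fill .top)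

/-- The standard reduction `→sr` (union of the four rules). -/
def SR (e e' : SExp) : Prop := ∃ a, SRL a e e'

/-- The transformation `(top)`: `C[⊤ ∧ e] →top C[e]` for all general contexts `C`. -/
inductive TopT : SExp → SExp → Prop where
  | mk (C : GCtx) (e : SExp) : TopT (C.fill (.and .top e)) (C.fill e)

/-- Convergence: `e ↓` iff `e →sr* ⊤`. -/
def SConv (e : SExp) : Prop := Relation.ReflTransGen SR e .top

/-- Redexes with their contracta. -/
inductive Rdx : SExp → SExp → Prop where
  | bot (e : SExp) : Rdx (.and .bot e) .bot
  | top (e : SExp) : Rdx (.and .top e) e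
  | neg1 : Rdx (.neg .top) .bot
  | neg2 : Rdx (.neg .bot) .top

lemma fill_ne_bot {A : ECtx} {r c : SExp} (h : Rdx r c) : ECtx.fill A r ≠ .bot := by
  cases A <;> simp [ECtx.fill] <;> rintro rfl <;> cases h

lemma fill_ne_top {A : ECtx} {r c : SExp} (h : Rdx r c) : ECtx.fill A r ≠ .top := by
  cases A <;> simp [ECtx.fill] <;> rintro rfl <;> cases h

lemma uniq (A : ECtx) : ∀ (A' : ECtx) {r c r' c' : SExp}, Rdx r c → Rdx r' c' →
    ECtx.fill A r = ECtx.fill A' r' → A = A' ∧ r = r' := by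
  induction A with
  | hole =>
    intro A' r c r' c' h h' he
    cases A' with
    | hole => exact ⟨rfl, he⟩
    | neg A'' =>
      exfalso
      simp only [ECtx.fill] at he
      cases h with
      | bot e => cases he
      | top e => cases he
      | neg1 => injection he with h1; exact fill_ne_top h' h1.symm
      | neg2 => injection he with h1; exact fill_ne_bot h' h1.symm
    | and A'' t =>
      exfalso
      simp only [ECtx.fill] at he
      cases h with
      | bot e => injection he with h1 h2; exact fill_ne_bot h' h1.symm
      | top e => injection he with h1 h2; exact fill_ne_top h' h1.symm
      | neg1 => cases he
      | neg2 => cases he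
  | neg A₁ ih =>
    intro A' r c r' c' h h' he
    cases A' with
    | hole =>
      exfalso
      simp only [ECtx.fill] at he
      cases h' with
      | bot e => cases he
      | top e => cases he
      | neg1 => injection he with h1; exact fill_ne_top h h1
      | neg2 => injection he with h1; exact fill_ne_bot h h1
    | neg A'' =>
      simp only [ECtx.fill] at he
      injection he with h1
      obtain ⟨hA, hr⟩ := ih A'' h h' h1
      exact ⟨by rw [hA], hr⟩
    | and A'' t => simp [ECtx.fill] at he
  | and A₁ t ih =>
    intro A' r c r' c' h h' he
    cases A' with
    | hole =>
      exfalso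
      simp only [ECtx.fill] at he
      cases h' with
      | bot e => injection he with h1 h2; exact fill_ne_bot h h1
      | top e => injection he with h1 h2; exact fill_ne_top h h1
      | neg1 => cases he
      | neg2 => cases he
    | neg A'' => simp [ECtx.fill] at he
    | and A'' t' =>
      simp only [ECtx.fill] at he
      injection he with h1 h2
      obtain ⟨hA, hr⟩ := ih A'' h h' h1
      exact ⟨by rw [hA, h2], hr⟩

lemma rdx_func {r c c' : SExp} (h : Rdx r c) (h' : Rdx r c') : c = c' := by
  cases h <;> cases h' <;> rfl

lemma srl_decomp {a : SRLab} {e e' : SExp} (h : SRL a e e') :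
    ∃ (A : ECtx) (r c : SExp), Rdx r c ∧ e = A.fill r ∧ e' = A.fill c := by
  cases h with
  | bot A e => exact ⟨A, _, _, .bot e, rfl, rfl⟩
  | top A e => exact ⟨A, _, _, .top e, rfl, rfl⟩
  | neg1 A => exact ⟨A, _, _, .neg1, rfl, rfl⟩
  | neg2 A => exact ⟨A, _, _, .neg2, rfl, rfl⟩

/-- the standard reduction of `Simple` is deterministic. -/
theorem simple_sr_deterministic :
    ∀ e e1 e2 : SExp, SR e e1 → SR e e2 → e1 = e2 := by
  rintro e e1 e2 ⟨a, h⟩ ⟨a', h'⟩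
  obtain ⟨A, r, c, hr, rfl, rfl⟩ := srl_decomp h
  obtain ⟨A', r', c', hr', he, rfl⟩ := srl_decomp h'
  obtain ⟨rfl, rfl⟩ := uniq A A' hr hr' he
  rw [rdx_func hr hr']
end

section
/- In the calculus Simple, the expressions ⊤ and ⊥ have no →sr-successor, and every other expression has exactly one →sr-successor: for every Simple expression e with e ≠ ⊤ and e ≠ ⊥ there exists a unique e' such that e →sr e'. -/
/-- Deterministic step function. -/
def sstep : SExp → Option SExp
  | .bot => none
  | .top => none
  | .neg .top => some .bot
  | .neg .bot => some .top
  | .neg e => (sstep e).map .neg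
  | .and .bot _ => some .bot
  | .and .top e => some e
  | .and e1 e2 => (sstep e1).map (fun x => .and x e2)

lemma sstep_fill (A : ECtx) (e e' : SExp) (h : sstep e = some e') :
    sstep (A.fill e) = some (A.fill e') := by
  induction A with
  | hole => simpa [ECtx.fill]
  | neg A ih =>
    cases hA : A.fill e with
    | top => rw [hA] at ih; simp [sstep] at ih
    | bot => rw [hA] at ih; simp [sstep] at ih
    | neg x => rw [hA] at ih; simp [ECtx.fill, hA, sstep, ih]
    | and x y => rw [hA] at ih; simp [ECtx.fill, hA, sstep, ih]
  | and A t ih =>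
    cases hA : A.fill e with
    | top => rw [hA] at ih; simp [sstep] at ih
    | bot => rw [hA] at ih; simp [sstep] at ih
    | neg x => rw [hA] at ih; simp [ECtx.fill, hA, sstep, ih]
    | and x y => rw [hA] at ih; simp [ECtx.fill, hA, sstep, ih]

lemma sr_sstep {e e' : SExp} (h : SR e e') : sstep e = some e' := by
  obtain ⟨a, h⟩ := h
  cases h with
  | bot A t => exact sstep_fill A _ _ rfl
  | top A t => exact sstep_fill A _ _ rfl
  | neg1 A => exact sstep_fill A _ _ rfl
  | neg2 A => exact sstep_fill A _ _ rfl

lemma sr_neg {e e' : SExp} (h : SR e e') : SR (.neg e) (.neg e') := by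
  obtain ⟨a, h⟩ := h
  cases h with
  | bot A t => exact ⟨_, SRL.bot (ECtx.neg A) t⟩
  | top A t => exact ⟨_, SRL.top (ECtx.neg A) t⟩
  | neg1 A => exact ⟨_, SRL.neg1 (ECtx.neg A)⟩
  | neg2 A => exact ⟨_, SRL.neg2 (ECtx.neg A)⟩

lemma sr_and {e e' : SExp} (t : SExp) (h : SR e e') :
    SR (.and e t) (.and e' t) := by
  obtain ⟨a, h⟩ := h
  cases h with
  | bot A s => exact ⟨_, SRL.bot (ECtx.and A t) s⟩
  | top A s => exact ⟨_, SRL.top (ECtx.and A t) s⟩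
  | neg1 A => exact ⟨_, SRL.neg1 (ECtx.and A t)⟩
  | neg2 A => exact ⟨_, SRL.neg2 (ECtx.and A t)⟩

lemma sstep_sr : ∀ e e', sstep e = some e' → SR e e' := by
  intro e
  induction e with
  | bot => intro e' h; simp [sstep] at h
  | top => intro e' h; simp [sstep] at h
  | neg e ih =>
    intro e' h
    cases e with
    | top => simp [sstep] at h; subst h; exact ⟨_, SRL.neg1 .hole⟩
    | bot => simp [sstep] at h; subst h; exact ⟨_, SRL.neg2 .hole⟩
    | neg x =>
      simp [sstep] at h
      obtain ⟨y, hy, rfl⟩ := h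
      exact sr_neg (ih _ hy)
    | and x y =>
      simp only [sstep, Option.map_eq_some_iff] at h
      obtain ⟨z, hz, rfl⟩ := h
      exact sr_neg (ih _ hz)
  | and e1 e2 ih1 ih2 =>
    intro e' h
    cases e1 with
    | top => simp [sstep] at h; subst h; exact ⟨_, SRL.top .hole e2⟩
    | bot => simp [sstep] at h; subst h; exact ⟨_, SRL.bot .hole e2⟩
    | neg x =>
      simp only [sstep, Option.map_eq_some_iff] at h
      obtain ⟨z, hz, rfl⟩ := h
      exact sr_and e2 (ih1 _ hz)
    | and x y =>
      simp only [sstep, Option.map_eq_some_iff] at h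
      obtain ⟨z, hz, rfl⟩ := h
      exact sr_and e2 (ih1 _ hz)

lemma sstep_isSome : ∀ e : SExp, e ≠ .top → e ≠ .bot → (sstep e).isSome := by
  intro e
  induction e with
  | bot => intro _ h; exact absurd rfl h
  | top => intro h _; exact absurd rfl h
  | neg e ih =>
    intro _ _
    cases e with
    | top => simp [sstep]
    | bot => simp [sstep]
    | neg x => have := ih (by simp) (by simp); simpa [sstep] using this
    | and x y => have := ih (by simp) (by simp); simpa [sstep] using this
  | and e1 e2 ih1 ih2 =>
    intro _ _
    cases e1 with
    | top => simp [sstep]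
    | bot => simp [sstep]
    | neg x => have := ih1 (by simp) (by simp); simpa [sstep] using this
    | and x y => have := ih1 (by simp) (by simp); simpa [sstep] using this

/-- `⊤` and `⊥` have no `→sr`-successor, and every other
expression has exactly one `→sr`-successor. -/
theorem simple_sr_progress_unique :
    (¬ ∃ e', SR .top e') ∧ (¬ ∃ e', SR .bot e') ∧
      (∀ e : SExp, e ≠ .top → e ≠ .bot → ∃! e', SR e e') := by
  refine ⟨?_, ?_, ?_⟩
  · rintro ⟨e', h⟩
    have := sr_sstep h
    simp [sstep] at this
  · rintro ⟨e', h⟩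
    have := sr_sstep h
    simp [sstep] at this
  · intro e ht hb
    obtain ⟨e', he'⟩ := Option.isSome_iff_exists.mp (sstep_isSome e ht hb)
    refine ⟨e', sstep_sr e e' he', ?_⟩
    intro y hy
    have := sr_sstep hy
    rw [he'] at this
    exact (Option.some_inj.mp this).symm
end

section
/- Completeness of the forking diagrams for (top) in Simple: for all Simple expressions e, e1, e2, if e →sr e1 and e →top e2, then e1 = e2, or e2 →sr e1, or there exists e' such that e1 →top e' and e2 →sr e'. -/
/-- One-step standard reduction as a function. -/
def step : SExp → Option SExp
  | .bot => none
  | .top => none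
  | .neg .top => some .bot
  | .neg .bot => some .top
  | .neg e => (step e).map .neg
  | .and .bot _ => some .bot
  | .and .top e => some e
  | .and e t => (step e).map (.and · t)

/-- Redex/contractum pairs. -/
inductive Red : SExp → SExp → Prop where
  | bot (e : SExp) : Red (.and .bot e) .bot
  | top (e : SExp) : Red (.and .top e) e
  | neg1 : Red (.neg .top) .bot
  | neg2 : Red (.neg .bot) .top

lemma fill_ne (A : ECtx) {r r' : SExp} (h : Red r r') :
    A.fill r ≠ .top ∧ A.fill r ≠ .bot := by
  cases A <;> cases h <;> simp [ECtx.fill]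

lemma gfill_ne (C : GCtx) (t : SExp) :
    C.fill (.and .top t) ≠ .top ∧ C.fill (.and .top t) ≠ .bot := by
  cases C <;> simp [GCtx.fill]

lemma SR_neg {x y : SExp} (h : SR x y) : SR (.neg x) (.neg y) := by
  obtain ⟨a, h⟩ := h
  cases h with
  | bot A e => exact ⟨_, SRL.bot (.neg A) e⟩
  | top A e => exact ⟨_, SRL.top (.neg A) e⟩
  | neg1 A => exact ⟨_, SRL.neg1 (.neg A)⟩
  | neg2 A => exact ⟨_, SRL.neg2 (.neg A)⟩

lemma SR_andL {x y : SExp} (t : SExp) (h : SR x y) : SR (.and x t) (.and y t) := by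
  obtain ⟨a, h⟩ := h
  cases h with
  | bot A e => exact ⟨_, SRL.bot (.and A t) e⟩
  | top A e => exact ⟨_, SRL.top (.and A t) e⟩
  | neg1 A => exact ⟨_, SRL.neg1 (.and A t)⟩
  | neg2 A => exact ⟨_, SRL.neg2 (.and A t)⟩

lemma TopT_neg {x y : SExp} (h : TopT x y) : TopT (.neg x) (.neg y) := by
  cases h with
  | mk C e => exact TopT.mk (.neg C) e

lemma TopT_andL {x y : SExp} (t : SExp) (h : TopT x y) : TopT (.and x t) (.and y t) := by
  cases h with
  | mk C e => exact TopT.mk (.andL C t) e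

lemma step_neg {e : SExp} (h1 : e ≠ .top) (h2 : e ≠ .bot) :
    step (.neg e) = (step e).map .neg := by
  cases e <;> first | rfl | simp_all

lemma step_and {e : SExp} (t : SExp) (h1 : e ≠ .top) (h2 : e ≠ .bot) :
    step (.and e t) = (step e).map (.and · t) := by
  cases e <;> first | rfl | simp_all

lemma step_fill (A : ECtx) {r r' : SExp} (h : Red r r') :
    step (A.fill r) = some (A.fill r') := by
  induction A with
  | hole => cases h <;> rfl
  | neg A ih =>
      show step (.neg (A.fill r)) = some (.neg (A.fill r'))
      rw [step_neg (fill_ne A h).1 (fill_ne A h).2, ih]; rfl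
  | and A t ih =>
      show step (.and (A.fill r) t) = some (.and (A.fill r') t)
      rw [step_and t (fill_ne A h).1 (fill_ne A h).2, ih]; rfl

lemma step_sound {e e' : SExp} (h : SR e e') : step e = some e' := by
  obtain ⟨a, h⟩ := h
  cases h with
  | bot A e => exact step_fill A (Red.bot e)
  | top A e => exact step_fill A (Red.top e)
  | neg1 A => exact step_fill A Red.neg1
  | neg2 A => exact step_fill A Red.neg2

lemma step_complete : ∀ {e e' : SExp}, step e = some e' → SR e e' := by
  intro e
  induction e with
  | bot => intro e' h; simp [step] at h
  | top => intro e' h; simp [step] at h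
  | neg x ih =>
      intro e' h
      cases x with
      | top =>
          obtain rfl : e' = .bot := by simpa [step] using h.symm
          exact ⟨_, SRL.neg1 .hole⟩
      | bot =>
          obtain rfl : e' = .top := by simpa [step] using h.symm
          exact ⟨_, SRL.neg2 .hole⟩
      | neg y =>
          rw [step_neg (by simp) (by simp), Option.map_eq_some_iff] at h
          obtain ⟨u, hu, rfl⟩ := h
          exact SR_neg (ih hu)
      | and y z =>
          rw [step_neg (by simp) (by simp), Option.map_eq_some_iff] at h
          obtain ⟨u, hu, rfl⟩ := h
          exact SR_neg (ih hu)
  | and x y ihx ihy =>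
      intro e' h
      cases x with
      | bot =>
          obtain rfl : e' = .bot := by simpa [step] using h.symm
          exact ⟨_, SRL.bot .hole y⟩
      | top =>
          obtain rfl : e' = y := by simpa [step] using h.symm
          exact ⟨_, SRL.top .hole _⟩
      | neg z =>
          rw [step_and y (by simp) (by simp), Option.map_eq_some_iff] at h
          obtain ⟨u, hu, rfl⟩ := h
          exact SR_andL y (ihx hu)
      | and z w =>
          rw [step_and y (by simp) (by simp), Option.map_eq_some_iff] at h
          obtain ⟨u, hu, rfl⟩ := h
          exact SR_andL y (ihx hu)

lemma main_forking (C : GCtx) (t : SExp) :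
    ∀ e1 : SExp, step (C.fill (.and .top t)) = some e1 →
      e1 = C.fill t ∨ SR (C.fill t) e1 ∨ ∃ e', TopT e1 e' ∧ SR (C.fill t) e' := by
  induction C with
  | hole =>
      intro e1 h
      obtain rfl : e1 = t := by simpa [GCtx.fill, step] using h.symm
      exact Or.inl rfl
  | neg C ih =>
      intro e1 h
      rw [show GCtx.fill (.neg C) (.and .top t) = .neg (C.fill (.and .top t)) from rfl,
        step_neg (gfill_ne C t).1 (gfill_ne C t).2, Option.map_eq_some_iff] at h
      obtain ⟨u, hu, rfl⟩ := h
      rcases ih u hu with h' | h' | ⟨e', h1, h2⟩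
      · exact Or.inl (by rw [h']; rfl)
      · exact Or.inr (Or.inl (SR_neg h'))
      · exact Or.inr (Or.inr ⟨.neg e', TopT_neg h1, SR_neg h2⟩)
  | andL C s ih =>
      intro e1 h
      rw [show GCtx.fill (.andL C s) (.and .top t) = .and (C.fill (.and .top t)) s from rfl,
        step_and s (gfill_ne C t).1 (gfill_ne C t).2, Option.map_eq_some_iff] at h
      obtain ⟨u, hu, rfl⟩ := h
      rcases ih u hu with h' | h' | ⟨e', h1, h2⟩
      · exact Or.inl (by rw [h']; rfl)
      · exact Or.inr (Or.inl (SR_andL s h'))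
      · exact Or.inr (Or.inr ⟨.and e' s, TopT_andL s h1, SR_andL s h2⟩)
  | andR s C ih =>
      intro e1 h
      cases s with
      | bot =>
          obtain rfl : e1 = .bot := by simpa [GCtx.fill, step] using h.symm
          exact Or.inr (Or.inl ⟨_, SRL.bot .hole (C.fill t)⟩)
      | top =>
          obtain rfl : e1 = C.fill (.and .top t) := by simpa [GCtx.fill, step] using h.symm
          exact Or.inr (Or.inr ⟨C.fill t, TopT.mk C t, ⟨_, SRL.top .hole (C.fill t)⟩⟩)
      | neg z =>
          rw [show GCtx.fill (.andR (.neg z) C) (.and .top t)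
                = .and (.neg z) (C.fill (.and .top t)) from rfl,
            step_and _ (by simp) (by simp), Option.map_eq_some_iff] at h
          obtain ⟨u, hu, rfl⟩ := h
          exact Or.inr (Or.inr ⟨.and u (C.fill t), TopT.mk (.andR u C) t,
            SR_andL _ (step_complete hu)⟩)
      | and z w =>
          rw [show GCtx.fill (.andR (.and z w) C) (.and .top t)
                = .and (.and z w) (C.fill (.and .top t)) from rfl,
            step_and _ (by simp) (by simp), Option.map_eq_some_iff] at h
          obtain ⟨u, hu, rfl⟩ := h
          exact Or.inr (Or.inr ⟨.and u (C.fill t), TopT.mk (.andR u C) t,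
            SR_andL _ (step_complete hu)⟩)

/-- completeness of the forking diagrams for `(top)` in `Simple`. -/
theorem simple_top_forking_diagrams :
    ∀ e e1 e2 : SExp, SR e e1 → TopT e e2 →
      e1 = e2 ∨ SR e2 e1 ∨ ∃ e', TopT e1 e' ∧ SR e2 e' := by
  intro e e1 e2 hsr htop
  have hstep := step_sound hsr
  cases htop with
  | mk C t => exact main_forking C t e1 hstep
end

section
/- The transformation (top) in Simple preserves convergence: for all Simple expressions e1, e2, if e1 →top e2 and e1↓, then e2↓. -/
def seval : SExp → Bool
  | .bot => false
  | .top => true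
  | .neg e => !(seval e)
  | .and a b => seval a && seval b

lemma seval_fill (A : ECtx) {x y : SExp} (h : seval x = seval y) :
    seval (A.fill x) = seval (A.fill y) := by
  induction A with
  | hole => exact h
  | neg A ih => simp [ECtx.fill, seval, ih]
  | and A t ih => simp [ECtx.fill, seval, ih]

lemma seval_gfill (C : GCtx) {x y : SExp} (h : seval x = seval y) :
    seval (C.fill x) = seval (C.fill y) := by
  induction C with
  | hole => exact h
  | neg C ih => simp [GCtx.fill, seval, ih]
  | andL C t ih => simp [GCtx.fill, seval, ih]
  | andR t C ih => simp [GCtx.fill, seval, ih]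

lemma seval_sr {e e' : SExp} (h : SR e e') : seval e = seval e' := by
  obtain ⟨a, h⟩ := h
  cases h with
  | bot A e => exact seval_fill A (by simp [seval])
  | top A e => exact seval_fill A (by simp [seval])
  | neg1 A => exact seval_fill A (by simp [seval])
  | neg2 A => exact seval_fill A (by simp [seval])

def ECtx.comp : ECtx → ECtx → ECtx
  | .hole, B => B
  | .neg A, B => .neg (A.comp B)
  | .and A t, B => .and (A.comp B) t

lemma fill_comp (A B : ECtx) (e : SExp) :
    (A.comp B).fill e = A.fill (B.fill e) := by
  induction A with
  | hole => rfl
  | neg A ih => simp [ECtx.comp, ECtx.fill, ih]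
  | and A t ih => simp [ECtx.comp, ECtx.fill, ih]

lemma sr_ctx (A : ECtx) {e e' : SExp} (h : SR e e') : SR (A.fill e) (A.fill e') := by
  obtain ⟨a, h⟩ := h
  cases h with
  | bot B t => exact ⟨_, by rw [← fill_comp, ← fill_comp]; exact SRL.bot (A.comp B) t⟩
  | top B t => exact ⟨_, by rw [← fill_comp, ← fill_comp]; exact SRL.top (A.comp B) t⟩
  | neg1 B => exact ⟨_, by rw [← fill_comp, ← fill_comp]; exact SRL.neg1 (A.comp B)⟩
  | neg2 B => exact ⟨_, by rw [← fill_comp, ← fill_comp]; exact SRL.neg2 (A.comp B)⟩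

lemma srs_ctx (A : ECtx) {e e' : SExp} (h : Relation.ReflTransGen SR e e') :
    Relation.ReflTransGen SR (A.fill e) (A.fill e') := by
  induction h with
  | refl => exact Relation.ReflTransGen.refl
  | tail _ hstep ih => exact ih.tail (sr_ctx A hstep)

lemma norm (e : SExp) :
    Relation.ReflTransGen SR e (if seval e then .top else .bot) := by
  induction e with
  | bot => simpa [seval] using Relation.ReflTransGen.refl
  | top => simpa [seval] using Relation.ReflTransGen.refl
  | neg e ih =>
    have h1 : Relation.ReflTransGen SR (SExp.neg e)
        (SExp.neg (if seval e then .top else .bot)) := srs_ctx (.neg .hole) ih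
    cases hv : seval e with
    | true =>
      simp only [hv, if_true] at h1
      refine (h1.tail ⟨.neg1, SRL.neg1 .hole⟩).trans ?_
      simpa [ECtx.fill, seval, hv] using Relation.ReflTransGen.refl
    | false =>
      simp only [hv, if_false] at h1
      refine (h1.tail ⟨.neg2, SRL.neg2 .hole⟩).trans ?_
      simpa [ECtx.fill, seval, hv] using Relation.ReflTransGen.refl
  | and a b iha ihb =>
    have h1 : Relation.ReflTransGen SR (SExp.and a b)
        (SExp.and (if seval a then .top else .bot) b) := srs_ctx (.and .hole b) iha
    cases hv : seval a with
    | true =>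
      simp only [hv, if_true] at h1
      refine ((h1.tail ⟨.top, SRL.top .hole b⟩).trans ihb).trans ?_
      simpa [ECtx.fill, seval, hv] using Relation.ReflTransGen.refl
    | false =>
      simp only [hv, if_false] at h1
      refine (h1.tail ⟨.bot, SRL.bot .hole b⟩).trans ?_
      simpa [ECtx.fill, seval, hv] using Relation.ReflTransGen.refl

lemma conv_seval {e : SExp} (h : SConv e) : seval e = true := by
  induction h using Relation.ReflTransGen.head_induction_on with
  | refl => rfl
  | head hstep _ ih => rw [seval_sr hstep]; exact ih

/-- the transformation `(top)` preserves convergence. -/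
theorem simple_top_preserves_convergence :
    ∀ e1 e2 : SExp, TopT e1 e2 → SConv e1 → SConv e2 := by
  rintro _ _ ⟨C, e⟩ h
  have h1 : seval (C.fill (SExp.and .top e)) = true := conv_seval h
  have h2 : seval (C.fill e) = true := by
    rw [← seval_gfill C (x := SExp.and .top e) (by simp [seval])]
    exact h1
  have := norm (C.fill e)
  rw [h2] at this
  simpa [SConv] using this
end

section
/- Abstract forking-diagram induction lemma: let E be a type, SR and T binary relations on E, and Ans a predicate on E; write e↓ iff there exists a with Ans a and SR* e a (reflexive-transitive closure of SR). Assume (i) for all e, t: if Ans e and T e t then t↓; and (ii) for all e, e1, e2: if SR e e1 and T e e2, then SR* e2 e1, or there exists e' with T e1 e' and SR* e2 e'. Then for all e, t: if T e t and e↓, then t↓. -/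
/-- abstract forking-diagram induction lemma.
`e↓` is written out as `∃ a, Ans a ∧ Relation.ReflTransGen SR e a`. -/
theorem abstract_forking_diagram_induction {E : Type*}
    (SR T : E → E → Prop) (Ans : E → Prop)
    (hans : ∀ e t, Ans e → T e t → ∃ a, Ans a ∧ Relation.ReflTransGen SR t a)
    (hfork : ∀ e e1 e2, SR e e1 → T e e2 →
      Relation.ReflTransGen SR e2 e1 ∨
        ∃ e', T e1 e' ∧ Relation.ReflTransGen SR e2 e') :
    ∀ e t, T e t → (∃ a, Ans a ∧ Relation.ReflTransGen SR e a) →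
      ∃ a, Ans a ∧ Relation.ReflTransGen SR t a := by
  intro e t ht ⟨a, ha, hra⟩
  induction hra using Relation.ReflTransGen.head_induction_on generalizing t with
  | refl => exact hans _ _ ha ht
  | head hstep _ ih =>
    rcases hfork _ _ _ hstep ht with h | ⟨e', hte', hre'⟩
    · exact ⟨a, ha, h.trans (by assumption)⟩
    · obtain ⟨a', ha', hra'⟩ := ih _ hte'
      exact ⟨a', ha', hre'.trans hra'⟩
end

section
/- Abstract convergence equivalence via diagrams: let E be a type, SR and T binary relations on E, and Ans a predicate on E; write e↓ iff there exists a with Ans a and SR* e a. Assume (i) for all e, t: if Ans e and T e t then t↓; (ii) for all e, e1, e2: if SR e e1 and T e e2, then SR* e2 e1 or there exists e' with T e1 e' and SR* e2 e'; (iii) for all e, t: if T e t and Ans t then e↓; and (iv) for all e, t, t': if T e t and SR t t', then there exists e' with SR* e e' and (e' = t' or T e' t'). Then T is convergence equivalent: for all e, t with T e t, e↓ ⇔ t↓. -/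
/-- abstract convergence equivalence via diagrams.
`e↓` is written out as `∃ a, Ans a ∧ Relation.ReflTransGen SR e a`. -/
theorem abstract_convergence_equivalence {E : Type*}
    (SR T : E → E → Prop) (Ans : E → Prop)
    (h1 : ∀ e t, Ans e → T e t → ∃ a, Ans a ∧ Relation.ReflTransGen SR t a)
    (h2 : ∀ e e1 e2, SR e e1 → T e e2 →
      Relation.ReflTransGen SR e2 e1 ∨
        ∃ e', T e1 e' ∧ Relation.ReflTransGen SR e2 e')
    (h3 : ∀ e t, T e t → Ans t → ∃ a, Ans a ∧ Relation.ReflTransGen SR e a)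
    (h4 : ∀ e t t', T e t → SR t t' →
      ∃ e', Relation.ReflTransGen SR e e' ∧ (e' = t' ∨ T e' t')) :
    ∀ e t, T e t →
      ((∃ a, Ans a ∧ Relation.ReflTransGen SR e a) ↔
        (∃ a, Ans a ∧ Relation.ReflTransGen SR t a)) := by
  have fwd : ∀ e a, Relation.ReflTransGen SR e a → Ans a →
      ∀ t, T e t → ∃ b, Ans b ∧ Relation.ReflTransGen SR t b := by
    intro e a hred
    induction hred using Relation.ReflTransGen.head_induction_on with
    | refl => intro ha t ht; exact h1 _ t ha ht
    | head hstep hrest ih =>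
      rename_i x y
      intro ha t ht
      rcases h2 x y t hstep ht with h | ⟨e', hT, hred'⟩
      · exact ⟨a, ha, h.trans hrest⟩
      · obtain ⟨b, hb, hred''⟩ := ih ha e' hT
        exact ⟨b, hb, hred'.trans hred''⟩
  have bwd : ∀ t a, Relation.ReflTransGen SR t a → Ans a →
      ∀ e, T e t → ∃ b, Ans b ∧ Relation.ReflTransGen SR e b := by
    intro t a hred
    induction hred using Relation.ReflTransGen.head_induction_on with
    | refl => intro ha e he; exact h3 e _ he ha
    | head hstep hrest ih =>
      rename_i x y
      intro ha e he
      obtain ⟨e', hred', heq | hT⟩ := h4 e x y he hstep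
      · subst heq
        exact ⟨a, ha, hred'.trans hrest⟩
      · obtain ⟨b, hb, hred''⟩ := ih ha e' hT
        exact ⟨b, hb, hred'.trans hred''⟩
  intro e t ht
  constructor
  · rintro ⟨a, ha, hr⟩; exact fwd e a hr ha t ht
  · rintro ⟨a, ha, hr⟩; exact bwd t a hr ha e ht
end

section
/- The term rewrite system encoding the diagrams of the unified cpT transformation is non-terminating: the rewrite relation generated by the rules cpT(SRlbeta(x)) → SRlbeta(cpT(x)), cpT(SRlll(x)) → SRlll(cpT(x)), cpT(SRcp(x)) → SRcp(cpT(x)), cpT(SRcp(x)) → SRcp(cpT(cpT(x))), and cpT(SRlbeta(x)) → SRcp(SRlbeta(x)) admits an infinite rewrite sequence (for example starting from the term cpT(cpT(SRlbeta(y)))). -/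
/-- First-order terms over the signature with unary symbols
`cpT, SRlbeta, SRcp, SRlll` and variables. -/
inductive CTm : Type where
  | var : ℕ → CTm
  | cpT : CTm → CTm
  | SRlbeta : CTm → CTm
  | SRcp : CTm → CTm
  | SRlll : CTm → CTm

/-- Applying a substitution to a term. -/
def CTm.subst (σ : ℕ → CTm) : CTm → CTm
  | .var n => σ n
  | .cpT t => .cpT (t.subst σ)
  | .SRlbeta t => .SRlbeta (t.subst σ)
  | .SRcp t => .SRcp (t.subst σ)
  | .SRlll t => .SRlll (t.subst σ)

/-- The rules of the TRS encoding the diagrams of the unified `cpT`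
transformation (with rule variable `var 0`). -/
inductive CRule : CTm → CTm → Prop where
  | r1 : CRule (.cpT (.SRlbeta (.var 0))) (.SRlbeta (.cpT (.var 0)))
  | r2 : CRule (.cpT (.SRlll (.var 0))) (.SRlll (.cpT (.var 0)))
  | r3 : CRule (.cpT (.SRcp (.var 0))) (.SRcp (.cpT (.var 0)))
  | r4 : CRule (.cpT (.SRcp (.var 0))) (.SRcp (.cpT (.cpT (.var 0))))
  | r5 : CRule (.cpT (.SRlbeta (.var 0))) (.SRcp (.SRlbeta (.var 0)))

/-- The rewrite relation generated by the rules: closure under substitution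
and under arbitrary term contexts. -/
inductive CRw : CTm → CTm → Prop where
  | root {l r : CTm} (σ : ℕ → CTm) : CRule l r → CRw (l.subst σ) (r.subst σ)
  | cpT {t t'} : CRw t t' → CRw (.cpT t) (.cpT t')
  | SRlbeta {t t'} : CRw t t' → CRw (.SRlbeta t) (.SRlbeta t')
  | SRcp {t t'} : CRw t t' → CRw (.SRcp t) (.SRcp t')
  | SRlll {t t'} : CRw t t' → CRw (.SRlll t) (.SRlll t')

def wrapA : CTm := .cpT (.cpT (.SRlbeta (.var 0)))
def wrapB : CTm := .cpT (.SRcp (.SRlbeta (.var 0)))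

def wrap : ℕ → CTm → CTm
  | 0, t => t
  | n + 1, t => .SRcp (wrap n t)

lemma wrap_rw {t t' : CTm} (k : ℕ) (h : CRw t t') : CRw (wrap k t) (wrap k t') := by
  induction k with
  | zero => exact h
  | succ k ih => exact CRw.SRcp ih

lemma stepAB : CRw wrapA wrapB :=
  CRw.cpT (CRw.root (fun _ => .var 0) CRule.r5)

lemma stepBA : CRw wrapB (.SRcp wrapA) :=
  CRw.root (fun _ => .SRlbeta (.var 0)) CRule.r4

lemma wrap_succ (k : ℕ) (t : CTm) : wrap k (.SRcp t) = wrap (k + 1) t := by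
  induction k with
  | zero => rfl
  | succ k ih => simp [wrap, ih]

/-- the TRS encoding the diagrams of the unified `cpT`
transformation is non-terminating: there is an infinite rewrite sequence,
starting from the term `cpT (cpT (SRlbeta y))`. -/
theorem cpT_trs_nonterminating :
    ∃ f : ℕ → CTm, f 0 = .cpT (.cpT (.SRlbeta (.var 0))) ∧
      ∀ n : ℕ, CRw (f n) (f (n + 1)) := by
  refine ⟨fun n => wrap (n / 2) (if n % 2 = 0 then wrapA else wrapB), by rfl, fun n => ?_⟩
  rcases Nat.even_or_odd n with ⟨k, hk⟩ | ⟨k, hk⟩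
  · subst hk
    have h1 : (k + k) / 2 = k := by omega
    have h2 : (k + k + 1) / 2 = k := by omega
    have h3 : (k + k) % 2 = 0 := by omega
    have h4 : (k + k + 1) % 2 = 1 := by omega
    simp only [h1, h2, h3, h4]
    simpa using wrap_rw k stepAB
  · subst hk
    have h1 : (2 * k + 1) / 2 = k := by omega
    have h2 : (2 * k + 1 + 1) / 2 = k + 1 := by omega
    have h3 : (2 * k + 1) % 2 = 1 := by omega
    have h4 : (2 * k + 1 + 1) % 2 = 0 := by omega
    simp only [h1, h2, h3, h4]
    rw [← wrap_succ]
    simpa using wrap_rw k stepBA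
end
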